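/- arXiv:2506.07832 — 2 statements merged into one kernel-verified Lean document; each statement's English description precedes it below -/
import Mathlib

section
/- Additivity on subintervals: let [a,b] be a compact line and G : [a,b] → ℝ amenable. For every c ∈ [a,b], a function f is G-integrable on [a,b] if and only if it is G-integrable on both [a,c] and [c,b], and in that case ∫_a^b f dG = ∫_a^c f dG + ∫_c^b f dG − f(c)G(c). -/
open Set Filter MeasureTheory

/-- A tagged partition of the interval `[a,b]` in a linear order `K`. -/
structure TaggedPartition (K : Type*) [LinearOrder K] (a b : K) where
  n : ℕ
  x : ℕ → K
  t : ℕ → K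
  x_zero : x 0 = a
  x_last : x n = b
  mono : ∀ i < n, x i ≤ x (i + 1)
  tag_mem : ∀ i < n, t (i + 1) ∈ Set.Icc (x i) (x (i + 1))

/-- A gauge on the interval `[a,b]` of `K`: each point of `[a,b]` is assigned a
relatively open subinterval of `[a,b]` containing it. -/
def IsGauge (K : Type*) [LinearOrder K] [TopologicalSpace K] (a b : K) (δ : K → Set K) : Prop :=
  ∀ x ∈ Set.Icc a b, x ∈ δ x ∧ (δ x).OrdConnected ∧ ∃ U, IsOpen U ∧ δ x = U ∩ Set.Icc a b

/-- A tagged partition is `δ`-fine when `(x_{i-1}, x_i] ⊆ δ(t_i)` for all `i`. -/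
def TaggedPartition.IsFine {K : Type*} [LinearOrder K] {a b : K}
    (P : TaggedPartition K a b) (δ : K → Set K) : Prop :=
  ∀ i < P.n, Set.Ioc (P.x i) (P.x (i + 1)) ⊆ δ (P.t (i + 1))

/-- The Riemann sum `S(f,G,P) = f(a)G(a) + Σ f(t_i)(G(x_i) - G(x_{i-1}))`. -/
noncomputable def riemannSum {K : Type*} [LinearOrder K] {a b : K}
    (f G : K → ℝ) (P : TaggedPartition K a b) : ℝ :=
  f a * G a + ∑ i ∈ Finset.range P.n, f (P.t (i + 1)) * (G (P.x (i + 1)) - G (P.x i))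

/-- `f` has Kurzweil–Stieltjes integral `A` with respect to `G` over `[a,b]`. -/
def HasIntegral {K : Type*} [LinearOrder K] [TopologicalSpace K]
    (f G : K → ℝ) (a b : K) (A : ℝ) : Prop :=
  ∀ ε : ℝ, 0 < ε → ∃ δ : K → Set K, IsGauge K a b δ ∧
    ∀ P : TaggedPartition K a b, P.IsFine δ → |riemannSum f G P - A| < ε

/-- `G` is amenable: right-continuous everywhere, and regulated (left limits exist at
left-dense points, right limits at right-dense points). -/
def Amenable {K : Type*} [LinearOrder K] [TopologicalSpace K] [BoundedOrder K]
    (G : K → ℝ) : Prop :=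
  (∀ x : K, ContinuousWithinAt G (Set.Ici x) x) ∧
  (∀ x : K, x ≠ ⊥ → (¬ ∃ y, y ⋖ x) → ∃ l, Filter.Tendsto G (nhdsWithin x (Set.Iio x)) (nhds l)) ∧
  (∀ x : K, x ≠ ⊤ → (¬ ∃ y, x ⋖ y) → ∃ l, Filter.Tendsto G (nhdsWithin x (Set.Ioi x)) (nhds l))

open Classical in
/-- `L_G(x)`: `0` at the least element, `G` of the immediate predecessor if `x` is
left-isolated, and the left limit of `G` at `x` if `x` is left-dense. -/
noncomputable def Lfun {K : Type*} [LinearOrder K] [TopologicalSpace K] [BoundedOrder K]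
    (G : K → ℝ) (x : K) : ℝ :=
  if x = ⊥ then 0
  else if h : ∃ y, y ⋖ x then G h.choose
  else Function.leftLim G x

/-- The set of variation sums of `G` over divisions of `[a,b]`. -/
def varSums {K : Type*} [LinearOrder K] (G : K → ℝ) (a b : K) : Set ℝ :=
  {v | ∃ (n : ℕ) (x : ℕ → K), x 0 = a ∧ x n = b ∧ (∀ i < n, x i ≤ x (i + 1)) ∧
        v = ∑ i ∈ Finset.range n, |G (x (i + 1)) - G (x i)|}

/-- `S` is null for the outer measure induced by `μ` via covers by countably many
open intervals. -/
def GNull {K : Type*} [LinearOrder K] [TopologicalSpace K] [MeasurableSpace K]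
    (μ : MeasureTheory.Measure K) (S : Set K) : Prop :=
  ∀ ε : ℝ, 0 < ε → ∃ I : ℕ → Set K, (∀ n, IsOpen (I n) ∧ (I n).OrdConnected) ∧
    S ⊆ ⋃ n, I n ∧ ∑' n, μ (I n) < ENNReal.ofReal ε
section Aux

variable {K : Type*} [LinearOrder K] [TopologicalSpace K] [OrderTopology K] [CompactSpace K]

/-- Every nonempty closed subset of a compact linear order has a least element. -/
lemma exists_least_of_isClosed {C : Set K} (hC : IsClosed C) (hne : C.Nonempty) :
    ∃ m ∈ C, ∀ y ∈ C, m ≤ y := by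
  haveI : Nonempty C := hne.to_subtype
  have h := IsCompact.nonempty_iInter_of_directed_nonempty_isCompact_isClosed
    (fun c : C => C ∩ Set.Iic (c : K)) ?_ ?_ ?_ ?_
  · obtain ⟨m, hm⟩ := h
    simp only [Set.mem_iInter, Set.mem_inter_iff, Set.mem_Iic] at hm
    obtain ⟨c₀⟩ := (inferInstance : Nonempty C)
    exact ⟨m, (hm c₀).1, fun y hy => (hm ⟨y, hy⟩).2⟩
  · intro c d
    rcases le_total (c : K) d with h | h
    · exact ⟨c, subset_rfl, Set.inter_subset_inter_right _ (Set.Iic_subset_Iic.2 h)⟩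
    · exact ⟨d, Set.inter_subset_inter_right _ (Set.Iic_subset_Iic.2 h), subset_rfl⟩
  · exact fun c => ⟨c, c.2, le_rfl⟩
  · exact fun c => (hC.inter isClosed_Iic).isCompact
  · exact fun c => hC.inter isClosed_Iic

/-- Every nonempty set with an upper bound has a least upper bound. -/
lemma exists_isLUB_of_compact {S : Set K} (hne : S.Nonempty) (hbd : (upperBounds S).Nonempty) :
    ∃ s, IsLUB S s := by
  have hclosed : IsClosed (upperBounds S) := by
    have : upperBounds S = ⋂ y ∈ S, Set.Ici y := by
      ext z; simp [upperBounds, Set.mem_iInter]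
    rw [this]
    exact isClosed_biInter fun y _ => isClosed_Ici
  obtain ⟨m, hm, hmin⟩ := exists_least_of_isClosed hclosed hbd
  exact ⟨m, hm, fun y hy => hmin y hy⟩

/-- The trivial partition of `[a,a]`. -/
def TaggedPartition.single (a : K) : TaggedPartition K a a where
  n := 0
  x := fun _ => a
  t := fun _ => a
  x_zero := rfl
  x_last := rfl
  mono := by intro i hi; exact absurd hi (Nat.not_lt_zero i)
  tag_mem := by intro i hi; exact absurd hi (Nat.not_lt_zero i)

/-- Extend a partition of `[a,s]` to `[a,u]` by appending one interval with a given tag. -/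
def TaggedPartition.extend {a s : K} (P : TaggedPartition K a s) (u tag : K)
    (hsu : s ≤ u) (htag : tag ∈ Set.Icc s u) : TaggedPartition K a u where
  n := P.n + 1
  x := fun i => if i ≤ P.n then P.x i else u
  t := fun i => if i ≤ P.n then P.t i else tag
  x_zero := by simp [P.x_zero]
  x_last := by simp
  mono := by
    intro i hi
    rcases Nat.lt_or_ge i P.n with h | h
    · simpa [Nat.le_of_lt h, Nat.succ_le_of_lt h] using P.mono i h
    · have hi' : i = P.n := by omega
      subst hi'
      simp [P.x_last, hsu]
  tag_mem := by
    intro i hi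
    rcases Nat.lt_or_ge i P.n with h | h
    · simpa [Nat.le_of_lt h, Nat.succ_le_of_lt h] using P.tag_mem i h
    · have hi' : i = P.n := by omega
      subst hi'
      simpa [P.x_last] using htag

lemma TaggedPartition.extend_isFine {a s : K} (P : TaggedPartition K a s) {u tag : K}
    {hsu : s ≤ u} {htag : tag ∈ Set.Icc s u} {δ : K → Set K}
    (hP : P.IsFine δ) (h : Set.Ioc s u ⊆ δ tag) : (P.extend u tag hsu htag).IsFine δ := by
  intro i hi
  have hi : i < P.n + 1 := hi
  rcases Nat.lt_or_ge i P.n with hlt | hge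
  · simpa [TaggedPartition.extend, Nat.le_of_lt hlt, Nat.succ_le_of_lt hlt] using hP i hlt
  · have hi' : i = P.n := by omega
    subst hi'
    simpa [TaggedPartition.extend, P.x_last] using h

lemma riemannSum_extend {a s : K} (f G : K → ℝ) (P : TaggedPartition K a s) (u tag : K)
    (hsu : s ≤ u) (htag : tag ∈ Set.Icc s u) :
    riemannSum f G (P.extend u tag hsu htag) = riemannSum f G P + f tag * (G u - G s) := by
  simp only [riemannSum, TaggedPartition.extend, Finset.sum_range_succ]
  have hterms : ∀ i ∈ Finset.range P.n,
      f (if i + 1 ≤ P.n then P.t (i+1) else tag) *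
        (G (if i + 1 ≤ P.n then P.x (i+1) else u) - G (if i ≤ P.n then P.x i else u))
      = f (P.t (i+1)) * (G (P.x (i+1)) - G (P.x i)) := by
    intro i hi
    rw [Finset.mem_range] at hi
    simp [Nat.le_of_lt hi, Nat.succ_le_of_lt hi]
  rw [Finset.sum_congr rfl hterms]
  have h1 : ¬ (P.n + 1 ≤ P.n) := by omega
  simp [h1, P.x_last]
  ring

/-- Cousin's lemma: every gauge on `[a,b]` admits a fine tagged partition. -/
lemma exists_fine_partition {a b : K} (hab : a ≤ b) {δ : K → Set K}
    (hδ : IsGauge K a b δ) : ∃ P : TaggedPartition K a b, P.IsFine δ := by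
  classical
  set S : Set K := {y | y ∈ Set.Icc a b ∧ ∃ P : TaggedPartition K a y, P.IsFine δ} with hS
  have haS : a ∈ S := ⟨⟨le_rfl, hab⟩, TaggedPartition.single a, fun i hi => absurd hi (Nat.not_lt_zero i)⟩
  have hbdd : b ∈ upperBounds S := fun y hy => hy.1.2
  obtain ⟨s₀, hs₀⟩ := exists_isLUB_of_compact ⟨a, haS⟩ ⟨b, hbdd⟩
  have has₀ : a ≤ s₀ := hs₀.1 haS
  have hs₀b : s₀ ≤ b := hs₀.2 hbdd
  have hs₀Icc : s₀ ∈ Set.Icc a b := ⟨has₀, hs₀b⟩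
  obtain ⟨hmem, hconn, U, hU, hUeq⟩ := hδ s₀ hs₀Icc
  have hs₀U : s₀ ∈ U := by rw [hUeq] at hmem; exact hmem.1
  -- s₀ ∈ S
  have hs₀S : s₀ ∈ S := by
    by_cases h : s₀ ∈ S
    · exact h
    · have hane : a ≠ s₀ := fun h' => h (h' ▸ haS)
      have halt : a < s₀ := lt_of_le_of_ne has₀ hane
      obtain ⟨l, hl, hIoc⟩ := exists_Ioc_subset_of_mem_nhds (hU.mem_nhds hs₀U) ⟨a, halt⟩
      -- find y ∈ S with l < y
      have : ¬ l ∈ upperBounds S := fun hub => absurd (hs₀.2 hub) (not_le.2 hl)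
      obtain ⟨y, hyS, hly⟩ := by
        simpa [upperBounds, not_forall] using this
      have hys₀ : y ≤ s₀ := hs₀.1 hyS
      obtain ⟨⟨hay, _⟩, P, hP⟩ := hyS
      refine ⟨⟨has₀, hs₀b⟩, P.extend s₀ s₀ hys₀ ⟨hys₀, le_rfl⟩, P.extend_isFine hP ?_⟩
      intro z hz
      rw [hUeq]
      exact ⟨hIoc ⟨lt_trans hly hz.1, hz.2⟩, le_trans hay (le_of_lt hz.1), le_trans hz.2 hs₀b⟩
  -- s₀ = b
  rcases eq_or_lt_of_le hs₀b with heq | hlt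
  · subst heq; exact hs₀S.2
  · exfalso
    obtain ⟨_, P, hP⟩ := hs₀S
    by_cases hcov : ∃ u, s₀ ⋖ u
    · obtain ⟨u, hcu⟩ := hcov
      have hub : u ≤ b := le_of_not_gt fun h => hcu.2 hlt h
      have huIcc : u ∈ Set.Icc a b := ⟨le_trans has₀ hcu.1.le, hub⟩
      have huδ : u ∈ δ u := (hδ u huIcc).1
      have hsub : Set.Ioc s₀ u ⊆ δ u := by
        intro z hz
        have hz' : z = u := le_antisymm hz.2 (le_of_not_gt fun h => hcu.2 hz.1 h)
        rwa [hz']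
      have huS : u ∈ S := ⟨huIcc, P.extend u u hcu.1.le ⟨hcu.1.le, le_rfl⟩,
        P.extend_isFine hP hsub⟩
      exact absurd (hs₀.1 huS) (not_le.2 hcu.1)
    · -- densely ordered above s₀
      obtain ⟨u, hu, hIco⟩ := exists_Ico_subset_of_mem_nhds (hU.mem_nhds hs₀U) ⟨b, hlt⟩
      have : ¬ s₀ ⋖ u := fun hc => hcov ⟨u, hc⟩
      obtain ⟨v, hv1, hv2⟩ := (not_covBy_iff hu).1 this
      set v' := min v b with hv'
      have hs₀v' : s₀ < v' := lt_min hv1 hlt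
      have hsub : Set.Ioc s₀ v' ⊆ δ s₀ := by
        intro z hz
        rw [hUeq]
        refine ⟨hIco ⟨le_of_lt hz.1, lt_of_le_of_lt (le_trans hz.2 (min_le_left _ _)) hv2⟩,
          le_trans has₀ (le_of_lt hz.1), le_trans hz.2 (min_le_right _ _)⟩
      have hv'S : v' ∈ S := by
        refine ⟨⟨le_trans has₀ (le_of_lt hs₀v'), min_le_right _ _⟩,
          P.extend v' s₀ (le_of_lt hs₀v') ⟨le_rfl, le_of_lt hs₀v'⟩, P.extend_isFine hP hsub⟩
      exact absurd (hs₀.1 hv'S) (not_le.2 hs₀v')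

end Aux
section Aux2

variable {K : Type*} [LinearOrder K] [TopologicalSpace K] [OrderTopology K] [CompactSpace K]

lemma TaggedPartition.x_mono {a b : K} (P : TaggedPartition K a b) {i j : ℕ}
    (hij : i ≤ j) (hj : j ≤ P.n) : P.x i ≤ P.x j := by
  induction j with
  | zero => simp_all
  | succ m ih =>
    rcases Nat.lt_or_ge i (m+1) with h | h
    · exact le_trans (ih (by omega) (by omega)) (P.mono m (by omega))
    · have : i = m + 1 := by omega
      subst this; exact le_rfl

lemma TaggedPartition.IsFine.mono' {a b : K} {P : TaggedPartition K a b} {δ δ' : K → Set K}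
    (h : P.IsFine δ) (hsub : ∀ x, δ x ⊆ δ' x) : P.IsFine δ' :=
  fun i hi => (h i hi).trans (hsub _)

/-- Gluing two sequences at index `n₁`. -/
def joinFun {α : Type*} (n₁ : ℕ) (x₁ x₂ : ℕ → α) : ℕ → α :=
  fun i => if i ≤ n₁ then x₁ i else x₂ (i - n₁)

lemma joinFun_le {α : Type*} {n₁ : ℕ} {x₁ x₂ : ℕ → α} {i : ℕ} (h : i ≤ n₁) :
    joinFun n₁ x₁ x₂ i = x₁ i := if_pos h

lemma joinFun_add {α : Type*} {n₁ : ℕ} {x₁ x₂ : ℕ → α} (hagree : x₁ n₁ = x₂ 0) (j : ℕ) :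
    joinFun n₁ x₁ x₂ (n₁ + j) = x₂ j := by
  rcases Nat.eq_zero_or_pos j with h | h
  · subst h
    simpa [joinFun] using hagree
  · have h1 : ¬ (n₁ + j ≤ n₁) := by omega
    simp [joinFun, h1]

/-- Concatenation of a partition of `[a,c]` and one of `[c,b]`. -/
def TaggedPartition.join {a c b : K} (P₁ : TaggedPartition K a c) (P₂ : TaggedPartition K c b) :
    TaggedPartition K a b where
  n := P₁.n + P₂.n
  x := joinFun P₁.n P₁.x P₂.x
  t := joinFun P₁.n P₁.t P₂.t
  x_zero := by rw [joinFun_le (Nat.zero_le _), P₁.x_zero]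
  x_last := by
    rw [joinFun_add (by rw [P₁.x_last, P₂.x_zero]), P₂.x_last]
  mono := by
    have hagree : P₁.x P₁.n = P₂.x 0 := by rw [P₁.x_last, P₂.x_zero]
    intro i hi
    rcases Nat.lt_or_ge i P₁.n with h | h
    · rw [joinFun_le (Nat.le_of_lt h), joinFun_le (Nat.succ_le_of_lt h)]
      exact P₁.mono i h
    · obtain ⟨j, rfl⟩ := Nat.exists_eq_add_of_le h
      have hj : j < P₂.n := by omega
      have e : P₁.n + j + 1 = P₁.n + (j + 1) := by omega
      rw [joinFun_add hagree, e, joinFun_add hagree]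
      exact P₂.mono j hj
  tag_mem := by
    have hagree : P₁.x P₁.n = P₂.x 0 := by rw [P₁.x_last, P₂.x_zero]
    intro i hi
    rcases Nat.lt_or_ge i P₁.n with h | h
    · rw [show joinFun P₁.n P₁.t P₂.t (i+1) = P₁.t (i+1) from joinFun_le (Nat.succ_le_of_lt h),
        show joinFun P₁.n P₁.x P₂.x (i+1) = P₁.x (i+1) from joinFun_le (Nat.succ_le_of_lt h),
        show joinFun P₁.n P₁.x P₂.x i = P₁.x i from joinFun_le (Nat.le_of_lt h)]
      exact P₁.tag_mem i h
    · obtain ⟨j, rfl⟩ := Nat.exists_eq_add_of_le h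
      have hj : j < P₂.n := by omega
      have e : P₁.n + j + 1 = P₁.n + (j + 1) := by omega
      have htag : joinFun P₁.n P₁.t P₂.t (P₁.n + j + 1) = P₂.t (j + 1) := by
        have h1 : ¬ (P₁.n + j + 1 ≤ P₁.n) := by omega
        have h2 : P₁.n + j + 1 - P₁.n = j + 1 := by omega
        simp [joinFun, h1, h2]
      rw [htag, joinFun_add hagree, e, joinFun_add hagree]
      exact P₂.tag_mem j hj

lemma TaggedPartition.join_t_add {a c b : K} (P₁ : TaggedPartition K a c)
    (P₂ : TaggedPartition K c b) {j : ℕ} (hj : 0 < j) :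
    (P₁.join P₂).t (P₁.n + j) = P₂.t j := by
  have h1 : ¬ (P₁.n + j ≤ P₁.n) := by omega
  have h2 : P₁.n + j - P₁.n = j := by omega
  simp [TaggedPartition.join, joinFun, h1, h2]

lemma TaggedPartition.join_x_add {a c b : K} (P₁ : TaggedPartition K a c)
    (P₂ : TaggedPartition K c b) (j : ℕ) : (P₁.join P₂).x (P₁.n + j) = P₂.x j :=
  joinFun_add (by rw [P₁.x_last, P₂.x_zero]) j

lemma TaggedPartition.join_isFine {a c b : K} {P₁ : TaggedPartition K a c}
    {P₂ : TaggedPartition K c b} {δ : K → Set K} (h₁ : P₁.IsFine δ) (h₂ : P₂.IsFine δ) :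
    (P₁.join P₂).IsFine δ := by
  intro i hi
  have hi : i < P₁.n + P₂.n := hi
  rcases Nat.lt_or_ge i P₁.n with h | h
  · have e1 : (P₁.join P₂).x i = P₁.x i := joinFun_le h.le
    have e2 : (P₁.join P₂).x (i+1) = P₁.x (i+1) := joinFun_le (Nat.succ_le_of_lt h)
    have e3 : (P₁.join P₂).t (i+1) = P₁.t (i+1) := joinFun_le (Nat.succ_le_of_lt h)
    rw [e1, e2, e3]
    exact h₁ i h
  · obtain ⟨j, rfl⟩ := Nat.exists_eq_add_of_le h
    have hj : j < P₂.n := by omega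
    have e : P₁.n + j + 1 = P₁.n + (j + 1) := by omega
    rw [P₁.join_x_add P₂, e, P₁.join_x_add P₂, P₁.join_t_add P₂ (by omega : 0 < j + 1)]
    exact h₂ j hj

lemma riemannSum_join {a c b : K} (f G : K → ℝ) (P₁ : TaggedPartition K a c)
    (P₂ : TaggedPartition K c b) :
    riemannSum f G (P₁.join P₂) = riemannSum f G P₁ + riemannSum f G P₂ - f c * G c := by
  have hn : (P₁.join P₂).n = P₁.n + P₂.n := rfl
  simp only [riemannSum, hn, Finset.sum_range_add]
  have e1 : ∀ i ∈ Finset.range P₁.n,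
      f ((P₁.join P₂).t (i+1)) * (G ((P₁.join P₂).x (i+1)) - G ((P₁.join P₂).x i))
        = f (P₁.t (i+1)) * (G (P₁.x (i+1)) - G (P₁.x i)) := by
    intro i hi
    rw [Finset.mem_range] at hi
    rw [show (P₁.join P₂).x i = P₁.x i from joinFun_le hi.le,
      show (P₁.join P₂).x (i+1) = P₁.x (i+1) from joinFun_le (Nat.succ_le_of_lt hi),
      show (P₁.join P₂).t (i+1) = P₁.t (i+1) from joinFun_le (Nat.succ_le_of_lt hi)]
  have e2 : ∀ j ∈ Finset.range P₂.n,
      f ((P₁.join P₂).t (P₁.n + j + 1)) *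
        (G ((P₁.join P₂).x (P₁.n + j + 1)) - G ((P₁.join P₂).x (P₁.n + j)))
        = f (P₂.t (j+1)) * (G (P₂.x (j+1)) - G (P₂.x j)) := by
    intro j hj
    have e : P₁.n + j + 1 = P₁.n + (j + 1) := by omega
    rw [P₁.join_x_add P₂, e, P₁.join_x_add P₂, P₁.join_t_add P₂ (by omega : 0 < j + 1)]
  rw [Finset.sum_congr rfl e1, Finset.sum_congr rfl e2]
  ring

end Aux2
section Aux3

variable {K : Type*} [LinearOrder K] [TopologicalSpace K] [OrderTopology K] [CompactSpace K]
  [BoundedOrder K]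

lemma isGauge_inter {a b : K} {δ δ' : K → Set K} (h : IsGauge K a b δ)
    (h' : IsGauge K a b δ') : IsGauge K a b (fun x => δ x ∩ δ' x) := by
  intro x hx
  obtain ⟨hm, hc, U, hU, he⟩ := h x hx
  obtain ⟨hm', hc', U', hU', he'⟩ := h' x hx
  refine ⟨⟨hm, hm'⟩, hc.inter hc', U ∩ U', hU.inter hU', ?_⟩
  show δ x ∩ δ' x = _
  rw [he, he']
  ext y; simp; tauto

lemma Icc_bot_top_inter_Iic (c : K) : Set.Icc (⊥ : K) ⊤ ∩ Set.Iic c = Set.Icc (⊥ : K) c := by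
  ext y; simp

lemma Icc_bot_top_inter_Ici (c : K) : Set.Icc (⊥ : K) ⊤ ∩ Set.Ici c = Set.Icc c (⊤ : K) := by
  ext y; simp

lemma isGauge_restrict_left {δ : K → Set K} (h : IsGauge K ⊥ ⊤ δ) (c : K) :
    IsGauge K ⊥ c (fun x => δ x ∩ Set.Iic c) := by
  intro x hx
  obtain ⟨hm, hc, U, hU, he⟩ := h x ⟨bot_le, le_top⟩
  refine ⟨⟨hm, hx.2⟩, hc.inter Set.ordConnected_Iic, U, hU, ?_⟩
  show δ x ∩ Set.Iic c = _
  rw [he, Set.inter_assoc, Icc_bot_top_inter_Iic]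

lemma isGauge_restrict_right {δ : K → Set K} (h : IsGauge K ⊥ ⊤ δ) (c : K) :
    IsGauge K c ⊤ (fun x => δ x ∩ Set.Ici c) := by
  intro x hx
  obtain ⟨hm, hc, U, hU, he⟩ := h x ⟨bot_le, le_top⟩
  refine ⟨⟨hm, hx.1⟩, hc.inter Set.ordConnected_Ici, U, hU, ?_⟩
  show δ x ∩ Set.Ici c = _
  rw [he, Set.inter_assoc, Icc_bot_top_inter_Ici]

/-- In an order topology, every open set containing `c` contains an ordconnected open
neighborhood of `c`. -/
lemma exists_ordConnected_open_nhd {U : Set K} (hU : IsOpen U) {c : K} (hc : c ∈ U) :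
    ∃ V : Set K, IsOpen V ∧ V.OrdConnected ∧ c ∈ V ∧ V ⊆ U := by
  by_cases hl : ∃ l, l < c
  · by_cases hu : ∃ u, c < u
    · obtain ⟨l, u, hmem, hsub⟩ := (mem_nhds_iff_exists_Ioo_subset' hl hu).1 (hU.mem_nhds hc)
      exact ⟨Set.Ioo l u, isOpen_Ioo, Set.ordConnected_Ioo, hmem, hsub⟩
    · -- c is a maximum
      obtain ⟨l, hlc, hsub⟩ := exists_Ioc_subset_of_mem_nhds (hU.mem_nhds hc) hl
      refine ⟨Set.Ioi l, isOpen_Ioi, Set.ordConnected_Ioi, hlc, ?_⟩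
      intro z hz
      exact hsub ⟨hz, le_of_not_gt fun h => hu ⟨z, h⟩⟩
  · by_cases hu : ∃ u, c < u
    · obtain ⟨u, hcu, hsub⟩ := exists_Ico_subset_of_mem_nhds (hU.mem_nhds hc) hu
      refine ⟨Set.Iio u, isOpen_Iio, Set.ordConnected_Iio, hcu, ?_⟩
      intro z hz
      exact hsub ⟨le_of_not_gt fun h => hl ⟨z, h⟩, hz⟩
    · refine ⟨Set.univ, isOpen_univ, Set.ordConnected_univ, trivial, ?_⟩
      intro z _
      have : z = c := le_antisymm (le_of_not_gt fun h => hu ⟨z, h⟩)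
        (le_of_not_gt fun h => hl ⟨z, h⟩)
      rwa [this]

lemma Icc_bot_top (K : Type*) [LinearOrder K] [BoundedOrder K] :
    Set.Icc (⊥ : K) ⊤ = Set.univ := by
  ext y; simp

/-- Truncation of a partition at index `k`. -/
def TaggedPartition.truncate {a b : K} (P : TaggedPartition K a b) (k : ℕ) (hk : k ≤ P.n) :
    TaggedPartition K a (P.x k) where
  n := k
  x := P.x
  t := P.t
  x_zero := P.x_zero
  x_last := rfl
  mono := fun i hi => P.mono i (lt_of_lt_of_le hi hk)
  tag_mem := fun i hi => P.tag_mem i (lt_of_lt_of_le hi hk)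

lemma riemannSum_truncate {a b : K} (f G : K → ℝ) (P : TaggedPartition K a b) (k : ℕ)
    (hk : k ≤ P.n) :
    riemannSum f G (P.truncate k hk) =
      f a * G a + ∑ i ∈ Finset.range k, f (P.t (i+1)) * (G (P.x (i+1)) - G (P.x i)) := rfl

/-- The tail of a partition from index `k`, with left endpoint replaced by `c`. -/
def TaggedPartition.tail {a b : K} (P : TaggedPartition K a b) (k : ℕ) (c : K) (hk : k ≤ P.n)
    (hcb : c ≤ b) (hxc : P.x k ≤ c)
    (hcx : k < P.n → c ≤ P.x (k+1)) (hct : k < P.n → c ≤ P.t (k+1)) :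
    TaggedPartition K c b where
  n := P.n - k
  x := fun j => if j = 0 then c else P.x (k + j)
  t := fun j => P.t (k + j)
  x_zero := rfl
  x_last := by
    rcases Nat.eq_zero_or_pos (P.n - k) with h | h
    · have hkn : k = P.n := by omega
      subst hkn
      rw [h]
      simp only [if_pos rfl]
      have := hxc
      rw [P.x_last] at this
      exact le_antisymm hcb this
    · have h0 : P.n - k ≠ 0 := by omega
      have he : k + (P.n - k) = P.n := by omega
      simp only [h0, if_neg, he]
      exact P.x_last
  mono := by
    intro j hj
    rcases Nat.eq_zero_or_pos j with h | h
    · subst h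
      have hkP : k < P.n := by omega
      simp only [if_pos rfl, if_neg (by omega : ¬ (0+1 = 0))]
      exact hcx hkP
    · have h1 : j ≠ 0 := by omega
      have h2 : j + 1 ≠ 0 := by omega
      have he : k + (j+1) = (k + j) + 1 := by omega
      simp only [h1, if_neg, h2, he]
      exact P.mono (k + j) (by omega)
  tag_mem := by
    intro j hj
    rcases Nat.eq_zero_or_pos j with h | h
    · subst h
      have hkP : k < P.n := by omega
      simp only [if_pos rfl, if_neg (by omega : ¬ (0+1 = 0))]
      exact ⟨hct hkP, (P.tag_mem k hkP).2⟩
    · have h1 : j ≠ 0 := by omega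
      have h2 : j + 1 ≠ 0 := by omega
      have he : k + (j+1) = (k + j) + 1 := by omega
      simp only [h1, if_neg, h2, he]
      exact P.tag_mem (k + j) (by omega)

end Aux3
section Aux4

variable {K : Type*} [LinearOrder K] [TopologicalSpace K] [OrderTopology K] [CompactSpace K]
  [BoundedOrder K]

lemma exists_split_gauge (c : K) {δ₁ δ₂ : K → Set K} (h₁ : IsGauge K ⊥ c δ₁)
    (h₂ : IsGauge K c ⊤ δ₂) (f G : K → ℝ) :
    ∃ δ, IsGauge K ⊥ ⊤ δ ∧ ∀ P : TaggedPartition K ⊥ ⊤, P.IsFine δ →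
      ∃ (P₁ : TaggedPartition K ⊥ c) (P₂ : TaggedPartition K c ⊤),
        P₁.IsFine δ₁ ∧ P₂.IsFine δ₂ ∧
        riemannSum f G P₁ + riemannSum f G P₂ = riemannSum f G P + f c * G c := by
  classical
  obtain ⟨hm₁, _, U₁, hU₁, he₁⟩ := h₁ c ⟨bot_le, le_rfl⟩
  obtain ⟨hm₂, _, U₂, hU₂, he₂⟩ := h₂ c ⟨le_rfl, le_top⟩
  have hcU₁ : c ∈ U₁ := by rw [he₁] at hm₁; exact hm₁.1
  have hcU₂ : c ∈ U₂ := by rw [he₂] at hm₂; exact hm₂.1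
  obtain ⟨V, hVopen, hVconn, hcV, hVsub⟩ :=
    exists_ordConnected_open_nhd (hU₁.inter hU₂) (⟨hcU₁, hcU₂⟩ : c ∈ U₁ ∩ U₂)
  set δ : K → Set K :=
    fun x => if x < c then δ₁ x ∩ Set.Iio c else if c < x then δ₂ x ∩ Set.Ioi c else V with hδ
  have hδlt : ∀ x, x < c → δ x = δ₁ x ∩ Set.Iio c := fun x h => if_pos h
  have hδgt : ∀ x, c < x → δ x = δ₂ x ∩ Set.Ioi c := fun x h => by
    rw [hδ]; simp only [if_neg (lt_asymm h), if_pos h]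
  have hδeq : δ c = V := by rw [hδ]; simp [lt_irrefl]
  have hgauge : IsGauge K ⊥ ⊤ δ := by
    intro x _
    rcases lt_trichotomy x c with h | h | h
    · obtain ⟨hm, hconn, U, hU, he⟩ := h₁ x ⟨bot_le, h.le⟩
      rw [hδlt x h]
      refine ⟨⟨hm, h⟩, hconn.inter Set.ordConnected_Iio, U ∩ Set.Iio c,
        hU.inter isOpen_Iio, ?_⟩
      rw [he, Icc_bot_top, Set.inter_univ]
      ext y
      simp only [Set.mem_inter_iff, Set.mem_Icc, Set.mem_Iio]
      exact ⟨fun ⟨⟨h1, _⟩, h3⟩ => ⟨h1, h3⟩, fun ⟨h1, h3⟩ => ⟨⟨h1, bot_le, h3.le⟩, h3⟩⟩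
    · subst h
      rw [hδeq]
      exact ⟨hcV, hVconn, V, hVopen, by rw [Icc_bot_top, Set.inter_univ]⟩
    · obtain ⟨hm, hconn, U, hU, he⟩ := h₂ x ⟨h.le, le_top⟩
      rw [hδgt x h]
      refine ⟨⟨hm, h⟩, hconn.inter Set.ordConnected_Ioi, U ∩ Set.Ioi c,
        hU.inter isOpen_Ioi, ?_⟩
      rw [he, Icc_bot_top, Set.inter_univ]
      ext y
      simp only [Set.mem_inter_iff, Set.mem_Icc, Set.mem_Ioi]
      exact ⟨fun ⟨⟨h1, _⟩, h3⟩ => ⟨h1, h3⟩, fun ⟨h1, h3⟩ => ⟨⟨h1, h3.le, le_top⟩, h3⟩⟩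
  refine ⟨δ, hgauge, ?_⟩
  intro P hP
  set k := Nat.findGreatest (fun i => P.x i ≤ c) P.n with hkdef
  have hk : k ≤ P.n := Nat.findGreatest_le _
  have hxk : P.x k ≤ c :=
    Nat.findGreatest_spec (P := fun i => P.x i ≤ c) (Nat.zero_le P.n)
      (show P.x 0 ≤ c by rw [P.x_zero]; exact bot_le)
  have hgt : ∀ m, k < m → m ≤ P.n → c < P.x m := fun m hm1 hm2 =>
    lt_of_not_ge (Nat.findGreatest_is_greatest hm1 hm2)
  have hcx1 : k < P.n → c ≤ P.x (k+1) := fun h => (hgt (k+1) (by omega) h).le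
  have htk : k < P.n → P.x k < c → P.t (k+1) = c := by
    intro hkn hxkc
    have hcin : c ∈ Set.Ioc (P.x k) (P.x (k+1)) := ⟨hxkc, hcx1 hkn⟩
    have hcδ := hP k hkn hcin
    rcases lt_trichotomy (P.t (k+1)) c with h | h | h
    · rw [hδlt _ h] at hcδ
      exact absurd hcδ.2 (lt_irrefl c)
    · exact h
    · rw [hδgt _ h] at hcδ
      exact absurd hcδ.2 (lt_irrefl c)
  have hct : k < P.n → c ≤ P.t (k+1) := by
    intro hkn
    rcases eq_or_lt_of_le hxk with h | h
    · exact h ▸ (P.tag_mem k hkn).1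
    · exact (htk hkn h).ge
  set P₁ : TaggedPartition K ⊥ c := (P.truncate k hk).extend c c hxk ⟨hxk, le_rfl⟩ with hP₁
  set P₂ : TaggedPartition K c ⊤ := P.tail k c hk le_top hxk hcx1 hct with hP₂
  have hxkc_of : k = P.n → P.x k = c := by
    intro h
    have h1 : P.x k = ⊤ := by rw [h, P.x_last]
    have : (⊤ : K) ≤ c := h1 ▸ hxk
    rw [h1]
    exact le_antisymm (h1 ▸ hxk) le_top
  -- fineness of P₁
  have hfine₁ : P₁.IsFine δ₁ := by
    apply TaggedPartition.extend_isFine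
    · intro i hi
      have hi : i < k := hi
      have hi' : i < P.n := lt_of_lt_of_le hi hk
      have hfine := hP i hi'
      have hti : P.t (i+1) ≤ c :=
        le_trans (P.tag_mem i hi').2 (le_trans (P.x_mono (by omega : i+1 ≤ k) hk) hxk)
      rcases eq_or_lt_of_le hti with h | h
      · intro y hy
        show y ∈ δ₁ (P.t (i+1))
        have hyV : y ∈ V := by
          have := hfine hy
          rw [h, hδeq] at this
          exact this
        rw [h, he₁]
        exact ⟨(hVsub hyV).1, bot_le,
          le_trans hy.2 (le_trans (P.x_mono (by omega : i+1 ≤ k) hk) hxk)⟩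
      · rw [hδlt _ h] at hfine
        exact fun y hy => (hfine hy).1
    · rcases eq_or_lt_of_le hxk with h | h
      · rw [h]
        simp
      · have hkn : k < P.n := by
          rcases Nat.lt_or_ge k P.n with h' | h'
          · exact h'
          · exact absurd (hxkc_of (by omega)) (ne_of_lt h)
        have htkc := htk hkn h
        intro y hy
        have hy' : y ∈ Set.Ioc (P.x k) (P.x (k+1)) := ⟨hy.1, le_trans hy.2 (hcx1 hkn)⟩
        have hyV : y ∈ V := by
          have := hP k hkn hy'
          rw [htkc, hδeq] at this
          exact this
        rw [he₁]
        exact ⟨(hVsub hyV).1, bot_le, hy.2⟩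
  -- fineness of P₂
  have hfine₂ : P₂.IsFine δ₂ := by
    intro j hj
    have hj' : j < P.n - k := hj
    have hkn : k < P.n := by omega
    rcases Nat.eq_zero_or_pos j with h0 | h0
    · subst h0
      have hx0 : P₂.x 0 = c := rfl
      have hx1 : P₂.x 1 = P.x (k+1) := by
        show (if (1:ℕ) = 0 then c else P.x (k+1)) = P.x (k+1)
        simp
      have ht1 : P₂.t 1 = P.t (k+1) := rfl
      rw [hx0, hx1, ht1]
      intro y hy
      have hy' : y ∈ Set.Ioc (P.x k) (P.x (k+1)) := ⟨lt_of_le_of_lt hxk hy.1, hy.2⟩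
      have hfine := hP k hkn hy'
      rcases eq_or_lt_of_le (hct hkn) with h | h
      · have hyV : y ∈ V := by rw [← h, hδeq] at hfine; exact hfine
        rw [← h, he₂]
        exact ⟨(hVsub hyV).2, hy.1.le, le_top⟩
      · rw [hδgt _ h] at hfine
        exact hfine.1
    · have h1 : j ≠ 0 := by omega
      have h2 : j + 1 ≠ 0 := by omega
      have hxj : P₂.x j = P.x (k+j) := by
        show (if j = 0 then c else P.x (k+j)) = P.x (k+j)
        simp [h1]
      have hxj1 : P₂.x (j+1) = P.x (k+j+1) := by
        show (if j+1 = 0 then c else P.x (k+(j+1))) = P.x (k+j+1)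
        simp [h2, Nat.add_assoc]
      have htj : P₂.t (j+1) = P.t (k+j+1) := by
        show P.t (k+(j+1)) = P.t (k+j+1)
        rw [Nat.add_assoc]
      rw [hxj, hxj1, htj]
      have hkj : k + j < P.n := by omega
      have hfine := hP (k+j) hkj
      have hcxkj : c ≤ P.x (k+j) :=
        le_trans (hcx1 hkn) (P.x_mono (by omega : k+1 ≤ k+j) (by omega))
      have hctj : c ≤ P.t (k+j+1) := le_trans hcxkj (P.tag_mem (k+j) hkj).1
      rcases eq_or_lt_of_le hctj with h | h
      · intro y hy
        have hyV : y ∈ V := by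
          have := hfine hy
          rw [← h, hδeq] at this
          exact this
        rw [← h, he₂]
        exact ⟨(hVsub hyV).2, le_trans hcxkj hy.1.le, le_top⟩
      · rw [hδgt _ h] at hfine
        exact fun y hy => (hfine hy).1
  -- the sum identity
  have hsum : riemannSum f G P₁ + riemannSum f G P₂ = riemannSum f G P + f c * G c := by
    have hS1 : riemannSum f G P₁ =
        (f ⊥ * G ⊥ + ∑ i ∈ Finset.range k, f (P.t (i+1)) * (G (P.x (i+1)) - G (P.x i)))
          + f c * (G c - G (P.x k)) := by
      rw [hP₁]
      exact riemannSum_extend f G (P.truncate k hk) c c hxk ⟨hxk, le_rfl⟩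
    have hS2 : riemannSum f G P₂ = f c * G c + ∑ j ∈ Finset.range (P.n - k),
        f (P.t (k + (j+1))) * (G (if j+1 = 0 then c else P.x (k+(j+1)))
          - G (if j = 0 then c else P.x (k+j))) := rfl
    have hSP : riemannSum f G P = f ⊥ * G ⊥ +
        ∑ i ∈ Finset.range P.n, f (P.t (i+1)) * (G (P.x (i+1)) - G (P.x i)) := rfl
    rcases Nat.eq_or_lt_of_le hk with hkn | hkn
    · -- k = P.n
      have hxkc := hxkc_of hkn
      have h0 : P.n - k = 0 := by omega
      rw [hS1, hS2, hSP, h0, hxkc, hkn]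
      simp
    · -- k < P.n
      obtain ⟨m, hm⟩ : ∃ m, P.n - k = m + 1 := ⟨P.n - k - 1, by omega⟩
      have hnk : P.n = k + (m + 1) := by omega
      rw [hS1, hS2, hSP, hm, hnk,
        Finset.sum_range_add (fun i => f (P.t (i+1)) * (G (P.x (i+1)) - G (P.x i))) k (m+1)]
      beta_reduce
      rw [Finset.sum_range_succ' (fun j => f (P.t (k + (j+1))) *
            (G (if j+1 = 0 then c else P.x (k+(j+1))) - G (if j = 0 then c else P.x (k+j)))) m,
          Finset.sum_range_succ' (fun j => f (P.t (k + j + 1)) *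
            (G (P.x (k + j + 1)) - G (P.x (k + j)))) m]
      have hcong : ∀ j ∈ Finset.range m,
          f (P.t (k + (j+1+1))) * (G (if j+1+1 = 0 then c else P.x (k+(j+1+1)))
            - G (if j+1 = 0 then c else P.x (k+(j+1))))
          = f (P.t (k + (j+1) + 1)) * (G (P.x (k + (j+1) + 1)) - G (P.x (k + (j+1)))) := by
        intro j _
        have e1 : k + (j+1+1) = k + (j+1) + 1 := by omega
        simp only [Nat.succ_ne_zero, ite_false, e1]
      rw [Finset.sum_congr rfl hcong]
      simp only [Nat.succ_ne_zero, ite_false, ite_true, Nat.add_zero]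
      rcases eq_or_lt_of_le hxk with hxx | hxx
      · rw [hxx]
        ring
      · rw [htk hkn hxx]
        ring
  exact ⟨P₁, P₂, hfine₁, hfine₂, hsum⟩

end Aux4
section Main

variable {K : Type*} [LinearOrder K] [TopologicalSpace K] [OrderTopology K] [CompactSpace K]
  [BoundedOrder K]

lemma exists_nat_two_div_lt {ε : ℝ} (hε : 0 < ε) : ∃ N : ℕ, 2/((N:ℝ)+1) < ε := by
  obtain ⟨N, hN⟩ := exists_nat_gt (2/ε)
  refine ⟨N, ?_⟩
  have h1 : (2:ℝ)/ε < (N:ℝ)+1 := hN.trans (by linarith)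
  have h2 : (2:ℝ) < ((N:ℝ)+1) * ε := by
    rw [div_lt_iff₀ hε] at h1
    nlinarith
  rw [div_lt_iff₀ (by positivity)]
  nlinarith

lemma hasIntegral_of_halves {f G : K → ℝ} {c : K} {A₁ A₂ : ℝ}
    (h₁ : HasIntegral f G (⊥ : K) c A₁) (h₂ : HasIntegral f G c (⊤ : K) A₂) :
    HasIntegral f G (⊥ : K) ⊤ (A₁ + A₂ - f c * G c) := by
  intro ε hε
  obtain ⟨δ₁, g1, hb1⟩ := h₁ (ε/2) (by positivity)
  obtain ⟨δ₂, g2, hb2⟩ := h₂ (ε/2) (by positivity)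
  obtain ⟨δ, gδ, hsplit⟩ := exists_split_gauge c g1 g2 f G
  refine ⟨δ, gδ, ?_⟩
  intro P hP
  obtain ⟨P₁, P₂, f1, f2, hsum⟩ := hsplit P hP
  have e : riemannSum f G P - (A₁ + A₂ - f c * G c)
      = (riemannSum f G P₁ - A₁) + (riemannSum f G P₂ - A₂) := by
    have := hsum
    linarith
  rw [e]
  calc |(riemannSum f G P₁ - A₁) + (riemannSum f G P₂ - A₂)|
      ≤ |riemannSum f G P₁ - A₁| + |riemannSum f G P₂ - A₂| := abs_add_le _ _
    _ < ε/2 + ε/2 := add_lt_add (hb1 _ f1) (hb2 _ f2)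
    _ = ε := by ring

lemma integral_unique_split {f G : K → ℝ} {c : K} {A A₁ A₂ : ℝ}
    (hA : HasIntegral f G (⊥ : K) ⊤ A) (h₁ : HasIntegral f G (⊥ : K) c A₁)
    (h₂ : HasIntegral f G c (⊤ : K) A₂) : A = A₁ + A₂ - f c * G c := by
  by_contra hne
  set ε := |A - (A₁ + A₂ - f c * G c)| with hεdef
  have hεpos : 0 < ε := abs_pos.2 (sub_ne_zero.2 hne)
  obtain ⟨δ, hδg, hδ⟩ := hA (ε/3) (by positivity)
  obtain ⟨δ₁, hδ₁g, hδ₁⟩ := h₁ (ε/3) (by positivity)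
  obtain ⟨δ₂, hδ₂g, hδ₂⟩ := h₂ (ε/3) (by positivity)
  have g1 : IsGauge K ⊥ c (fun x => (δ x ∩ Set.Iic c) ∩ δ₁ x) :=
    isGauge_inter (isGauge_restrict_left hδg c) hδ₁g
  have g2 : IsGauge K c ⊤ (fun x => (δ x ∩ Set.Ici c) ∩ δ₂ x) :=
    isGauge_inter (isGauge_restrict_right hδg c) hδ₂g
  obtain ⟨Q₁, hQ₁⟩ := exists_fine_partition bot_le g1
  obtain ⟨Q₂, hQ₂⟩ := exists_fine_partition le_top g2
  have hQ₁δ : Q₁.IsFine δ :=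
    hQ₁.mono' (fun x => Set.inter_subset_left.trans Set.inter_subset_left)
  have hQ₂δ : Q₂.IsFine δ :=
    hQ₂.mono' (fun x => Set.inter_subset_left.trans Set.inter_subset_left)
  have hQ₁δ₁ : Q₁.IsFine δ₁ := hQ₁.mono' (fun x => Set.inter_subset_right)
  have hQ₂δ₂ : Q₂.IsFine δ₂ := hQ₂.mono' (fun x => Set.inter_subset_right)
  have h0 := hδ _ (TaggedPartition.join_isFine hQ₁δ hQ₂δ)
  rw [riemannSum_join] at h0
  have hb1 := hδ₁ _ hQ₁δ₁
  have hb2 := hδ₂ _ hQ₂δ₂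
  have e : A - (A₁ + A₂ - f c * G c) =
      (-(riemannSum f G Q₁ + riemannSum f G Q₂ - f c * G c - A)) +
        ((riemannSum f G Q₁ - A₁) + (riemannSum f G Q₂ - A₂)) := by ring
  have : ε < ε := by
    calc ε = |A - (A₁ + A₂ - f c * G c)| := hεdef
      _ = |(-(riemannSum f G Q₁ + riemannSum f G Q₂ - f c * G c - A)) +
            ((riemannSum f G Q₁ - A₁) + (riemannSum f G Q₂ - A₂))| := by rw [← e]
      _ ≤ |(-(riemannSum f G Q₁ + riemannSum f G Q₂ - f c * G c - A))| +
            |(riemannSum f G Q₁ - A₁) + (riemannSum f G Q₂ - A₂)| := abs_add_le _ _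
      _ ≤ |(-(riemannSum f G Q₁ + riemannSum f G Q₂ - f c * G c - A))| +
            (|riemannSum f G Q₁ - A₁| + |riemannSum f G Q₂ - A₂|) :=
          add_le_add_right (abs_add_le _ _) _
      _ = |riemannSum f G Q₁ + riemannSum f G Q₂ - f c * G c - A| +
            (|riemannSum f G Q₁ - A₁| + |riemannSum f G Q₂ - A₂|) := by rw [abs_neg]
      _ < ε/3 + (ε/3 + ε/3) := by
          exact add_lt_add h0 (add_lt_add hb1 hb2)
      _ = ε := by ring
  exact lt_irrefl ε this

lemma halves_of_hasIntegral {f G : K → ℝ} (c : K) {A : ℝ}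
    (hA : HasIntegral f G (⊥ : K) ⊤ A) :
    (∃ A₁, HasIntegral f G (⊥ : K) c A₁) ∧ (∃ A₂, HasIntegral f G c (⊤ : K) A₂) := by
  classical
  have hchoice : ∀ n : ℕ, ∃ δ : K → Set K, IsGauge K ⊥ ⊤ δ ∧
      ∀ P : TaggedPartition K ⊥ ⊤, P.IsFine δ →
        |riemannSum f G P - A| < 1/((n:ℝ)+1) :=
    fun n => hA (1/((n:ℝ)+1)) (by positivity)
  choose δ₀ hδ₀gauge hδ₀ using hchoice
  let Δ : ℕ → K → Set K := fun n => Nat.rec (δ₀ 0) (fun m ih => fun x => ih x ∩ δ₀ (m+1) x) n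
  have hΔsucc : ∀ n, Δ (n+1) = fun x => Δ n x ∩ δ₀ (n+1) x := fun n => rfl
  have hΔgauge : ∀ n, IsGauge K ⊥ ⊤ (Δ n) := by
    intro n
    induction n with
    | zero => exact hδ₀gauge 0
    | succ m ih => rw [hΔsucc]; exact isGauge_inter ih (hδ₀gauge (m+1))
  have hΔsub : ∀ n x, Δ n x ⊆ δ₀ n x := by
    intro n
    cases n with
    | zero => exact fun x => subset_rfl
    | succ m => exact fun x => Set.inter_subset_right
  have hΔmono : ∀ {N n : ℕ}, N ≤ n → ∀ x, Δ n x ⊆ Δ N x := by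
    intro N n h
    induction n with
    | zero =>
      have : N = 0 := Nat.le_zero.1 h
      subst this; exact fun x => subset_rfl
    | succ m ih =>
      rcases Nat.eq_or_lt_of_le h with h' | h'
      · subst h'; exact fun x => subset_rfl
      · intro x
        exact (Set.inter_subset_left : Δ (m+1) x ⊆ Δ m x).trans (ih (by omega) x)
  have hex1 : ∀ n : ℕ, ∃ P : TaggedPartition K ⊥ c, P.IsFine (fun x => Δ n x ∩ Set.Iic c) :=
    fun n => exists_fine_partition bot_le (isGauge_restrict_left (hΔgauge n) c)
  have hex2 : ∀ n : ℕ, ∃ P : TaggedPartition K c ⊤, P.IsFine (fun x => Δ n x ∩ Set.Ici c) :=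
    fun n => exists_fine_partition le_top (isGauge_restrict_right (hΔgauge n) c)
  choose P1 hP1 using hex1
  choose P2 hP2 using hex2
  set s : ℕ → ℝ := fun n => riemannSum f G (P1 n) with hs
  set u : ℕ → ℝ := fun n => riemannSum f G (P2 n) with hu
  have key : ∀ (N : ℕ) (Q₁ : TaggedPartition K ⊥ c) (Q₂ : TaggedPartition K c ⊤),
      Q₁.IsFine (fun x => Δ N x ∩ Set.Iic c) → Q₂.IsFine (fun x => Δ N x ∩ Set.Ici c) →
      |riemannSum f G Q₁ + riemannSum f G Q₂ - f c * G c - A| < 1/((N:ℝ)+1) := by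
    intro N Q₁ Q₂ h1 h2
    have h1' : Q₁.IsFine (Δ N) := h1.mono' (fun x => Set.inter_subset_left)
    have h2' : Q₂.IsFine (Δ N) := h2.mono' (fun x => Set.inter_subset_left)
    have hfine : (Q₁.join Q₂).IsFine (δ₀ N) :=
      (TaggedPartition.join_isFine h1' h2').mono' (hΔsub N)
    have := hδ₀ N _ hfine
    rwa [riemannSum_join] at this
  have keyfine1 : ∀ {N n : ℕ}, N ≤ n → (P1 n).IsFine (fun x => Δ N x ∩ Set.Iic c) :=
    fun {N n} h => (hP1 n).mono'
      (fun x => Set.inter_subset_inter_left _ (hΔmono h x))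
  have keyfine2 : ∀ {N n : ℕ}, N ≤ n → (P2 n).IsFine (fun x => Δ N x ∩ Set.Ici c) :=
    fun {N n} h => (hP2 n).mono'
      (fun x => Set.inter_subset_inter_left _ (hΔmono h x))
  constructor
  · -- left half
    have hcauchy : CauchySeq s := by
      rw [Metric.cauchySeq_iff]
      intro ε hε
      obtain ⟨N, hN⟩ := exists_nat_two_div_lt hε
      refine ⟨N, fun p hp q hq => ?_⟩
      have h1 := key N (P1 p) (P2 N) (keyfine1 hp) (hP2 N)
      have h2 := key N (P1 q) (P2 N) (keyfine1 hq) (hP2 N)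
      rw [Real.dist_eq]
      set z : ℝ := A + f c * G c - u N with hz
      have e1 : s p - z = riemannSum f G (P1 p) + riemannSum f G (P2 N) - f c * G c - A := by
        simp only [hz, hs, hu]
        ring
      have e2 : z - s q = -(riemannSum f G (P1 q) + riemannSum f G (P2 N) - f c * G c - A) := by
        simp only [hz, hs, hu]
        ring
      calc |s p - s q| ≤ |s p - z| + |z - s q| := abs_sub_le _ _ _
        _ = |riemannSum f G (P1 p) + riemannSum f G (P2 N) - f c * G c - A| +
              |riemannSum f G (P1 q) + riemannSum f G (P2 N) - f c * G c - A| := by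
            rw [e1, e2, abs_neg]
        _ < 1/((N:ℝ)+1) + 1/((N:ℝ)+1) := add_lt_add h1 h2
        _ = 2/((N:ℝ)+1) := by ring
        _ < ε := hN
    obtain ⟨A₁, hA₁⟩ := cauchySeq_tendsto_of_complete hcauchy
    refine ⟨A₁, ?_⟩
    intro ε hε
    obtain ⟨N, hN⟩ := exists_nat_two_div_lt hε
    refine ⟨fun x => Δ N x ∩ Set.Iic c, isGauge_restrict_left (hΔgauge N) c, ?_⟩
    intro Q hQ
    have hq : ∀ n, N ≤ n → |riemannSum f G Q - s n| < 2/((N:ℝ)+1) := by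
      intro n hn
      have h1 := key N Q (P2 N) hQ (hP2 N)
      have h2 := key N (P1 n) (P2 N) (keyfine1 hn) (hP2 N)
      set z : ℝ := A + f c * G c - u N with hz
      have e1 : riemannSum f G Q - z =
          riemannSum f G Q + riemannSum f G (P2 N) - f c * G c - A := by
        simp only [hz, hu]
        ring
      have e2 : z - s n = -(riemannSum f G (P1 n) + riemannSum f G (P2 N) - f c * G c - A) := by
        simp only [hz, hs, hu]
        ring
      calc |riemannSum f G Q - s n| ≤ |riemannSum f G Q - z| + |z - s n| := abs_sub_le _ _ _
        _ = |riemannSum f G Q + riemannSum f G (P2 N) - f c * G c - A| +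
              |riemannSum f G (P1 n) + riemannSum f G (P2 N) - f c * G c - A| := by
            rw [e1, e2, abs_neg]
        _ < 1/((N:ℝ)+1) + 1/((N:ℝ)+1) := add_lt_add h1 h2
        _ = 2/((N:ℝ)+1) := by ring
    have hlim : Filter.Tendsto (fun n => |riemannSum f G Q - s n|) Filter.atTop
        (nhds |riemannSum f G Q - A₁|) := (tendsto_const_nhds.sub hA₁).abs
    have hle : |riemannSum f G Q - A₁| ≤ 2/((N:ℝ)+1) :=
      le_of_tendsto hlim (Filter.eventually_atTop.2 ⟨N, fun n hn => (hq n hn).le⟩)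
    exact lt_of_le_of_lt hle hN
  · -- right half
    have hcauchy : CauchySeq u := by
      rw [Metric.cauchySeq_iff]
      intro ε hε
      obtain ⟨N, hN⟩ := exists_nat_two_div_lt hε
      refine ⟨N, fun p hp q hq => ?_⟩
      have h1 := key N (P1 N) (P2 p) (hP1 N) (keyfine2 hp)
      have h2 := key N (P1 N) (P2 q) (hP1 N) (keyfine2 hq)
      rw [Real.dist_eq]
      set z : ℝ := A + f c * G c - s N with hz
      have e1 : u p - z = riemannSum f G (P1 N) + riemannSum f G (P2 p) - f c * G c - A := by
        simp only [hz, hs, hu]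
        ring
      have e2 : z - u q = -(riemannSum f G (P1 N) + riemannSum f G (P2 q) - f c * G c - A) := by
        simp only [hz, hs, hu]
        ring
      calc |u p - u q| ≤ |u p - z| + |z - u q| := abs_sub_le _ _ _
        _ = |riemannSum f G (P1 N) + riemannSum f G (P2 p) - f c * G c - A| +
              |riemannSum f G (P1 N) + riemannSum f G (P2 q) - f c * G c - A| := by
            rw [e1, e2, abs_neg]
        _ < 1/((N:ℝ)+1) + 1/((N:ℝ)+1) := add_lt_add h1 h2
        _ = 2/((N:ℝ)+1) := by ring
        _ < ε := hN
    obtain ⟨A₂, hA₂⟩ := cauchySeq_tendsto_of_complete hcauchy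
    refine ⟨A₂, ?_⟩
    intro ε hε
    obtain ⟨N, hN⟩ := exists_nat_two_div_lt hε
    refine ⟨fun x => Δ N x ∩ Set.Ici c, isGauge_restrict_right (hΔgauge N) c, ?_⟩
    intro Q hQ
    have hq : ∀ n, N ≤ n → |riemannSum f G Q - u n| < 2/((N:ℝ)+1) := by
      intro n hn
      have h1 := key N (P1 N) Q (hP1 N) hQ
      have h2 := key N (P1 N) (P2 n) (hP1 N) (keyfine2 hn)
      set z : ℝ := A + f c * G c - s N with hz
      have e1 : riemannSum f G Q - z =
          riemannSum f G (P1 N) + riemannSum f G Q - f c * G c - A := by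
        simp only [hz, hs]
        ring
      have e2 : z - u n = -(riemannSum f G (P1 N) + riemannSum f G (P2 n) - f c * G c - A) := by
        simp only [hz, hs, hu]
        ring
      calc |riemannSum f G Q - u n| ≤ |riemannSum f G Q - z| + |z - u n| := abs_sub_le _ _ _
        _ = |riemannSum f G (P1 N) + riemannSum f G Q - f c * G c - A| +
              |riemannSum f G (P1 N) + riemannSum f G (P2 n) - f c * G c - A| := by
            rw [e1, e2, abs_neg]
        _ < 1/((N:ℝ)+1) + 1/((N:ℝ)+1) := add_lt_add h1 h2
        _ = 2/((N:ℝ)+1) := by ring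
    have hlim : Filter.Tendsto (fun n => |riemannSum f G Q - u n|) Filter.atTop
        (nhds |riemannSum f G Q - A₂|) := (tendsto_const_nhds.sub hA₂).abs
    have hle : |riemannSum f G Q - A₂| ≤ 2/((N:ℝ)+1) :=
      le_of_tendsto hlim (Filter.eventually_atTop.2 ⟨N, fun n hn => (hq n hn).le⟩)
    exact lt_of_le_of_lt hle hN

end Main

theorem additivity_on_subintervals {K : Type*} [LinearOrder K] [TopologicalSpace K]
    [OrderTopology K] [CompactSpace K] [BoundedOrder K] (G f : K → ℝ) (hG : Amenable G)
    (c : K) :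
    ((∃ A, HasIntegral f G (⊥ : K) ⊤ A) ↔
      (∃ A₁, HasIntegral f G (⊥ : K) c A₁) ∧ (∃ A₂, HasIntegral f G c (⊤ : K) A₂)) ∧
    ∀ A A₁ A₂, HasIntegral f G (⊥ : K) ⊤ A → HasIntegral f G (⊥ : K) c A₁ →
      HasIntegral f G c (⊤ : K) A₂ → A = A₁ + A₂ - f c * G c := by
  constructor
  · constructor
    · rintro ⟨A, hA⟩
      exact halves_of_hasIntegral c hA
    · rintro ⟨⟨A₁, h1⟩, ⟨A₂, h2⟩⟩
      exact ⟨A₁ + A₂ - f c * G c, hasIntegral_of_halves h1 h2⟩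
  · intro A A₁ A₂ hA h1 h2
    exact integral_unique_split hA h1 h2
end

section
/- Strengthened Saks–Henstock Lemma (absolute version): under the hypotheses of the Saks–Henstock Lemma on a compact line, one has Σ_{k=1}^m | f(t_k)(G(b_k) − G(a_k)) + f(a_k)G(a_k) − ∫_{a_k}^{b_k} f dG | ≤ 4ε for every δ-fine tagged system of intervals, whenever δ is an ε-gauge for the G-integrable function f. -/
open Set Filter MeasureTheory

section SHDev

namespace TaggedPartition

variable {K : Type*} [LinearOrder K]

/-- The trivial partition of a degenerate interval. -/
def point (a : K) : TaggedPartition K a a :=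
  ⟨0, fun _ => a, fun _ => a, rfl, rfl, fun i hi => absurd hi (Nat.not_lt_zero i),
    fun i hi => absurd hi (Nat.not_lt_zero i)⟩

lemma point_isFine (a : K) (δ : K → Set K) : (point a).IsFine δ :=
  fun i hi => absurd hi (Nat.not_lt_zero i)

/-- The one-interval tagged partition. -/
def single_s11 (a b tag : K) (h1 : a ≤ tag) (h2 : tag ≤ b) : TaggedPartition K a b where
  n := 1
  x i := if i = 0 then a else b
  t _ := tag
  x_zero := by simp
  x_last := by simp
  mono := by
    intro i hi
    have hi0 : i = 0 := by omega
    subst hi0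
    simp [h1.trans h2]
  tag_mem := by
    intro i hi
    have hi0 : i = 0 := by omega
    subst hi0
    simp [h1, h2]

lemma single_isFine (a b tag : K) (h1 : a ≤ tag) (h2 : tag ≤ b) {δ : K → Set K}
    (h : Set.Ioc a b ⊆ δ tag) : (single_s11 a b tag h1 h2).IsFine δ := by
  intro i hi
  have hi' : i < 1 := hi
  have hi0 : i = 0 := by omega
  subst hi0
  simpa [single_s11] using h

lemma riemannSum_single (f G : K → ℝ) (a b tag : K) (h1 : a ≤ tag) (h2 : tag ≤ b) :
    riemannSum f G (single_s11 a b tag h1 h2) = f a * G a + f tag * (G b - G a) := by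
  simp [riemannSum, single_s11]

/-- Concatenation auxiliary function. -/
def appF (n : ℕ) (u v : ℕ → K) (i : ℕ) : K := if i ≤ n then u i else v (i - n)

lemma appF_le {n : ℕ} {u v : ℕ → K} {i : ℕ} (h : i ≤ n) : appF n u v i = u i := if_pos h

lemma appF_add {n : ℕ} {u v : ℕ → K} (j : ℕ) (hj : 0 < j) :
    appF n u v (n + j) = v j := by
  have h : ¬ n + j ≤ n := by omega
  rw [appF, if_neg h, Nat.add_sub_cancel_left]

lemma appF_add' {n : ℕ} {u v : ℕ → K} (h0 : u n = v 0) (j : ℕ) :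
    appF n u v (n + j) = v j := by
  rcases Nat.eq_zero_or_pos j with rfl | hj
  · rw [appF, if_pos (by omega)]
    simpa using h0
  · exact appF_add j hj

/-- Concatenation of tagged partitions. -/
def append {a b c : K} (P : TaggedPartition K a b) (Q : TaggedPartition K b c) :
    TaggedPartition K a c where
  n := P.n + Q.n
  x := appF P.n P.x Q.x
  t := appF P.n P.t Q.t
  x_zero := by rw [appF_le (Nat.zero_le _), P.x_zero]
  x_last := by
    rw [appF_add' (P.x_last.trans Q.x_zero.symm) Q.n, Q.x_last]
  mono := by
    intro i hi
    have h0 : P.x P.n = Q.x 0 := P.x_last.trans Q.x_zero.symm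
    rcases Nat.lt_or_ge i P.n with h | h
    · rw [appF_le (by omega), appF_le (by omega)]
      exact P.mono i h
    · obtain ⟨j, rfl⟩ := Nat.exists_eq_add_of_le h
      rw [show P.n + j + 1 = P.n + (j + 1) by omega, appF_add' h0 j, appF_add' h0 (j + 1)]
      exact Q.mono j (by omega)
  tag_mem := by
    intro i hi
    have h0 : P.x P.n = Q.x 0 := P.x_last.trans Q.x_zero.symm
    rcases Nat.lt_or_ge i P.n with h | h
    · rw [appF_le (by omega : i + 1 ≤ P.n), appF_le (by omega : i ≤ P.n),
        appF_le (by omega : i + 1 ≤ P.n)]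
      exact P.tag_mem i h
    · obtain ⟨j, rfl⟩ := Nat.exists_eq_add_of_le h
      rw [show P.n + j + 1 = P.n + (j + 1) by omega, appF_add (u := P.t) (v := Q.t) (j + 1) (Nat.succ_pos j),
        appF_add' h0 j, appF_add' h0 (j + 1)]
      exact Q.tag_mem j (by omega)

lemma append_isFine {a b c : K} [TopologicalSpace K] {δ : K → Set K}
    (P : TaggedPartition K a b) (Q : TaggedPartition K b c)
    (hP : P.IsFine δ) (hQ : Q.IsFine δ) : (P.append Q).IsFine δ := by
  intro i hi
  have hi' : i < P.n + Q.n := hi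
  have h0 : P.x P.n = Q.x 0 := P.x_last.trans Q.x_zero.symm
  show Set.Ioc (appF P.n P.x Q.x i) (appF P.n P.x Q.x (i + 1)) ⊆ δ (appF P.n P.t Q.t (i + 1))
  rcases Nat.lt_or_ge i P.n with h | h
  · rw [appF_le (by omega : i ≤ P.n), appF_le (by omega : i + 1 ≤ P.n),
      appF_le (by omega : i + 1 ≤ P.n)]
    exact hP i h
  · obtain ⟨j, rfl⟩ := Nat.exists_eq_add_of_le h
    rw [show P.n + j + 1 = P.n + (j + 1) by omega, appF_add (u := P.t) (v := Q.t) (j + 1) (Nat.succ_pos j),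
      appF_add' h0 j, appF_add' h0 (j + 1)]
    exact hQ j (by omega)

lemma riemannSum_append {a b c : K} (f G : K → ℝ)
    (P : TaggedPartition K a b) (Q : TaggedPartition K b c) :
    riemannSum f G (P.append Q) = riemannSum f G P + riemannSum f G Q - f b * G b := by
  have h0 : P.x P.n = Q.x 0 := P.x_last.trans Q.x_zero.symm
  show f a * G a + ∑ i ∈ Finset.range (P.n + Q.n),
      f (appF P.n P.t Q.t (i + 1)) * (G (appF P.n P.x Q.x (i + 1)) - G (appF P.n P.x Q.x i)) = _
  rw [Finset.sum_range_add]
  have e1 : ∀ i ∈ Finset.range P.n,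
      f (appF P.n P.t Q.t (i + 1)) * (G (appF P.n P.x Q.x (i + 1)) - G (appF P.n P.x Q.x i))
        = f (P.t (i + 1)) * (G (P.x (i + 1)) - G (P.x i)) := by
    intro i hi
    have := Finset.mem_range.mp hi
    rw [appF_le (by omega : i + 1 ≤ P.n), appF_le (by omega : i ≤ P.n),
      appF_le (by omega : i + 1 ≤ P.n)]
  have e2 : ∀ j ∈ Finset.range Q.n,
      f (appF P.n P.t Q.t (P.n + j + 1)) * (G (appF P.n P.x Q.x (P.n + j + 1)) - G (appF P.n P.x Q.x (P.n + j)))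
        = f (Q.t (j + 1)) * (G (Q.x (j + 1)) - G (Q.x j)) := by
    intro j hj
    rw [show P.n + j + 1 = P.n + (j + 1) by omega, appF_add (u := P.t) (v := Q.t) (j + 1) (Nat.succ_pos j),
      appF_add' h0 j, appF_add' h0 (j + 1)]
  rw [Finset.sum_congr rfl e1, Finset.sum_congr rfl e2]
  simp only [riemannSum]
  ring

end TaggedPartition

section Cousin

variable {K : Type*} [LinearOrder K] [TopologicalSpace K] [OrderTopology K] [CompactSpace K]

/-- Cousin's lemma on a compact line. -/
lemma cousin_exists (c d : K) (hcd : c ≤ d) (δ : K → Set K) (hδ : IsGauge K c d δ) :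
    ∃ P : TaggedPartition K c d, P.IsFine δ := by
  set S : Set K := {y | y ∈ Set.Icc c d ∧ ∃ P : TaggedPartition K c y, P.IsFine δ} with hSdef
  have hcS : c ∈ S := ⟨⟨le_refl c, hcd⟩, TaggedPartition.point c, TaggedPartition.point_isFine c δ⟩
  obtain ⟨u, huS, hub⟩ :=
    (isClosed_closure (s := S)).isCompact.exists_isGreatest ⟨c, subset_closure hcS⟩
  have ub : ∀ y ∈ S, y ≤ u := fun y hy => hub (subset_closure hy)
  have huIcc : u ∈ Set.Icc c d := by
    have h1 : closure S ⊆ Set.Icc c d := by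
      rw [← (isClosed_Icc (a := c) (b := d)).closure_eq]
      exact closure_mono (fun y hy => hy.1)
    exact h1 huS
  obtain ⟨huδ, hconn, U, hU, hUeq⟩ := hδ u huIcc
  have hUu : u ∈ U := by
    have h := huδ; rw [hUeq] at h; exact h.1
  -- Step 1 : u ∈ S
  have huS' : u ∈ S := by
    obtain ⟨v, hvU, hvS⟩ := mem_closure_iff.mp huS U hU hUu
    rcases eq_or_lt_of_le (ub v hvS) with heq | hvu
    · exact heq ▸ hvS
    · obtain ⟨P, hP⟩ := hvS.2
      have hvδ : v ∈ δ u := by rw [hUeq]; exact ⟨hvU, hvS.1⟩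
      refine ⟨huIcc, P.append (TaggedPartition.single_s11 v u u hvu.le le_rfl), ?_⟩
      refine TaggedPartition.append_isFine _ _ hP ?_
      exact TaggedPartition.single_isFine _ _ _ _ _
        (fun z hz => hconn.out hvδ huδ ⟨hz.1.le, hz.2⟩)
  -- Step 2 : u = d
  rcases eq_or_lt_of_le huIcc.2 with heq | hlt
  · exact heq ▸ huS'.2
  exfalso
  obtain ⟨w, hwcl, hwlb⟩ :=
    (isClosed_closure (s := Set.Ioc u d)).isCompact.exists_isLeast
      ⟨d, subset_closure ⟨hlt, le_rfl⟩⟩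
  have hwIcc : w ∈ Set.Icc u d := by
    have h1 : closure (Set.Ioc u d) ⊆ Set.Icc u d := by
      rw [← (isClosed_Icc (a := u) (b := d)).closure_eq]
      exact closure_mono Set.Ioc_subset_Icc_self
    exact h1 hwcl
  have hlb : ∀ z ∈ Set.Ioc u d, w ≤ z := fun z hz => hwlb (subset_closure hz)
  obtain ⟨Pu, hPu⟩ := huS'.2
  rcases eq_or_lt_of_le hwIcc.1 with heq | hwgt
  · -- u is a right accumulation point of Ioc u d
    have hucl : u ∈ closure (Set.Ioc u d) := heq ▸ hwcl
    obtain ⟨v, hvU, hvI⟩ := mem_closure_iff.mp hucl U hU hUu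
    have hvIcc : v ∈ Set.Icc c d := ⟨huIcc.1.trans hvI.1.le, hvI.2⟩
    have hvδ : v ∈ δ u := by rw [hUeq]; exact ⟨hvU, hvIcc⟩
    have hvS : v ∈ S := by
      refine ⟨hvIcc, Pu.append (TaggedPartition.single_s11 u v u le_rfl hvI.1.le), ?_⟩
      refine TaggedPartition.append_isFine _ _ hPu ?_
      exact TaggedPartition.single_isFine _ _ _ _ _
        (fun z hz => hconn.out huδ hvδ ⟨hz.1.le, hz.2⟩)
    exact absurd (ub v hvS) (not_le.mpr hvI.1)
  · -- w is the successor of u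
    have hwδ : w ∈ δ w := (hδ w ⟨huIcc.1.trans hwIcc.1, hwIcc.2⟩).1
    have hwS : w ∈ S := by
      refine ⟨⟨huIcc.1.trans hwIcc.1, hwIcc.2⟩,
        Pu.append (TaggedPartition.single_s11 u w w hwgt.le le_rfl), ?_⟩
      refine TaggedPartition.append_isFine _ _ hPu ?_
      refine TaggedPartition.single_isFine _ _ _ _ _ (fun z hz => ?_)
      have hz2 : z = w := by
        rcases eq_or_lt_of_le hz.2 with h | h
        · exact h
        · exact absurd (hlb z ⟨hz.1, hz.2.trans hwIcc.2⟩) (not_le.mpr h)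
      exact hz2 ▸ hwδ
    exact absurd (ub w hwS) (not_le.mpr hwgt)

end Cousin
section Gauges

variable {K : Type*} [LinearOrder K] [TopologicalSpace K] [BoundedOrder K]

lemma isGauge_restrict (δ : K → Set K) (hδ : IsGauge K ⊥ ⊤ δ) (c d : K) :
    IsGauge K c d (fun x => δ x ∩ Set.Icc c d) := by
  intro x hx
  obtain ⟨h1, h2, U, hU, hUeq⟩ := hδ x ⟨bot_le, le_top⟩
  refine ⟨⟨h1, hx⟩, h2.inter Set.ordConnected_Icc, U, hU, ?_⟩
  show δ x ∩ Set.Icc c d = U ∩ Set.Icc c d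
  rw [hUeq, Set.Icc_bot_top, Set.inter_univ]

lemma isGauge_inter_s11 {c d : K} (δ δ₂ : K → Set K) (hδ : IsGauge K ⊥ ⊤ δ)
    (hδ₂ : IsGauge K c d δ₂) : IsGauge K c d (fun x => δ x ∩ δ₂ x) := by
  intro x hx
  obtain ⟨h1, h2, U, hU, hUeq⟩ := hδ x ⟨bot_le, le_top⟩
  obtain ⟨g1, g2, V, hV, hVeq⟩ := hδ₂ x hx
  refine ⟨⟨h1, g1⟩, h2.inter g2, U ∩ V, hU.inter hV, ?_⟩
  show δ x ∩ δ₂ x = U ∩ V ∩ Set.Icc c d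
  rw [hUeq, hVeq, Set.Icc_bot_top, Set.inter_univ, Set.inter_assoc]

end Gauges

section Pair

variable {K : Type*} [LinearOrder K] [TopologicalSpace K] [OrderTopology K]
  [CompactSpace K] [BoundedOrder K]

/-- Given two families of fine partitions of the intervals of a system, one can complete
both to full fine partitions of `[⊥,⊤]` using the same partitions of the gaps. -/
lemma pair_exists (f G : K → ℝ) (δ : K → Set K) (hδ : IsGauge K ⊥ ⊤ δ) :
    ∀ (m : ℕ) (c : K) (a b : ℕ → K)
      (R R' : ∀ k, k < m → TaggedPartition K (a k) (b k)),
      (0 < m → c ≤ a 0) → (∀ k, k + 1 < m → b k ≤ a (k + 1)) →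
      (∀ k (h : k < m), (R k h).IsFine δ) → (∀ k (h : k < m), (R' k h).IsFine δ) →
      ∃ P P' : TaggedPartition K c ⊤, P.IsFine δ ∧ P'.IsFine δ ∧
        riemannSum f G P - riemannSum f G P' =
          ∑ k ∈ Finset.range m,
            (if h : k < m then riemannSum f G (R k h) - riemannSum f G (R' k h) else 0) := by
  intro m
  induction m with
  | zero =>
    intro c a b R R' hc hord hR hR'
    obtain ⟨P, hP⟩ := cousin_exists c ⊤ le_top _ (isGauge_restrict δ hδ c ⊤)
    have hPf : P.IsFine δ := fun i hi z hz => (hP i hi hz).1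
    exact ⟨P, P, hPf, hPf, by simp⟩
  | succ m ih =>
    intro c a b R R' hc hord hR hR'
    obtain ⟨Gp, hGp⟩ := cousin_exists c (a 0) (hc m.succ_pos) _ (isGauge_restrict δ hδ c (a 0))
    have hGpf : Gp.IsFine δ := fun i hi z hz => (hGp i hi hz).1
    obtain ⟨P₁, P₁', h1, h1', hsum⟩ := ih (b 0) (fun k => a (k + 1)) (fun k => b (k + 1))
      (fun k h => R (k + 1) (by omega)) (fun k h => R' (k + 1) (by omega))
      (fun hm => hord 0 (by omega)) (fun k hk => hord (k + 1) (by omega))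
      (fun k h => hR (k + 1) (by omega)) (fun k h => hR' (k + 1) (by omega))
    refine ⟨(Gp.append (R 0 m.succ_pos)).append P₁,
            (Gp.append (R' 0 m.succ_pos)).append P₁', ?_, ?_, ?_⟩
    · exact TaggedPartition.append_isFine _ _
        (TaggedPartition.append_isFine _ _ hGpf (hR 0 m.succ_pos)) h1
    · exact TaggedPartition.append_isFine _ _
        (TaggedPartition.append_isFine _ _ hGpf (hR' 0 m.succ_pos)) h1'
    · rw [TaggedPartition.riemannSum_append, TaggedPartition.riemannSum_append,
        TaggedPartition.riemannSum_append, TaggedPartition.riemannSum_append,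
        Finset.sum_range_succ']
      have hsum2 : ∑ k ∈ Finset.range m,
            (if h : k + 1 < m + 1 then riemannSum f G (R (k + 1) h) - riemannSum f G (R' (k + 1) h) else 0)
          = ∑ k ∈ Finset.range m,
            (if h : k < m then riemannSum f G (R (k + 1) (by omega)) - riemannSum f G (R' (k + 1) (by omega)) else 0) := by
        refine Finset.sum_congr rfl (fun k hk => ?_)
        have hk' := Finset.mem_range.mp hk
        rw [dif_pos (by omega : k + 1 < m + 1), dif_pos hk']
      rw [hsum2, ← hsum, dif_pos m.succ_pos]
      ring

end Pair

section Core

variable {K : Type*} [LinearOrder K] [TopologicalSpace K] [OrderTopology K]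
  [CompactSpace K] [BoundedOrder K]

/-- Saks–Henstock lemma (signed version): the partial sum differs from the sum of the
integrals by at most `2ε`. -/
lemma sh_core (f G : K → ℝ) (A : ℝ) (ε : ℝ) (hε : 0 < ε)
    (δ : K → Set K) (hδ : IsGauge K ⊥ ⊤ δ)
    (hδε : ∀ P : TaggedPartition K (⊥ : K) (⊤ : K), P.IsFine δ → |riemannSum f G P - A| < ε)
    (m : ℕ) (a b t : ℕ → K)
    (hmem : ∀ k < m, a k ≤ t k ∧ t k ≤ b k)
    (hord : ∀ k, k + 1 < m → b k ≤ a (k + 1))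
    (hfine : ∀ k < m, Set.Ioc (a k) (b k) ⊆ δ (t k))
    (ι : ℕ → ℝ) (hι : ∀ k < m, HasIntegral f G (a k) (b k) (ι k)) :
    |∑ k ∈ Finset.range m, (f (t k) * (G (b k) - G (a k)) + f (a k) * G (a k) - ι k)| ≤ 2 * ε := by
  rcases Nat.eq_zero_or_pos m with rfl | hm
  · simp only [Finset.range_zero, Finset.sum_empty, abs_zero]
    positivity
  apply le_of_forall_pos_le_add
  intro ε' hε'
  have hQ : ∀ k, k < m → ∃ Q : TaggedPartition K (a k) (b k), Q.IsFine δ ∧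
      |riemannSum f G Q - ι k| < ε' / m := by
    intro k hk
    obtain ⟨δ₂, hδ₂, hδ₂ε⟩ := hι k hk (ε' / m) (by positivity)
    obtain ⟨Q, hQf⟩ := cousin_exists (a k) (b k) ((hmem k hk).1.trans (hmem k hk).2) _
      (isGauge_inter_s11 δ δ₂ hδ hδ₂)
    exact ⟨Q, fun i hi z hz => (hQf i hi hz).1,
      hδ₂ε Q (fun i hi z hz => (hQf i hi hz).2)⟩
  choose Q hQf hQε using hQ
  obtain ⟨P, P', hPf, hP'f, hdiff⟩ := pair_exists f G δ hδ m ⊥ a b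
    (fun k h => TaggedPartition.single_s11 (a k) (b k) (t k) (hmem k h).1 (hmem k h).2) Q
    (fun _ => bot_le) hord
    (fun k h => TaggedPartition.single_isFine _ _ _ _ _ (hfine k h)) hQf
  set ρ : ℕ → ℝ := fun k => if h : k < m then riemannSum f G (Q k h) else 0 with hρ
  have h1 : ∀ k ∈ Finset.range m,
      (if h : k < m then
          riemannSum f G (TaggedPartition.single_s11 (a k) (b k) (t k) (hmem k h).1 (hmem k h).2)
            - riemannSum f G (Q k h) else 0)
        = f (t k) * (G (b k) - G (a k)) + f (a k) * G (a k) - ρ k := by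
    intro k hk
    have hk' := Finset.mem_range.mp hk
    rw [hρ]
    simp only [dif_pos hk']
    rw [TaggedPartition.riemannSum_single]
    ring
  have e1 : ∑ k ∈ Finset.range m, (f (t k) * (G (b k) - G (a k)) + f (a k) * G (a k) - ι k)
      = (riemannSum f G P - riemannSum f G P') + ∑ k ∈ Finset.range m, (ρ k - ι k) := by
    rw [hdiff, Finset.sum_congr rfl h1, ← Finset.sum_add_distrib]
    exact Finset.sum_congr rfl (fun k hk => by ring)
  have h2 : |riemannSum f G P - riemannSum f G P'| ≤ 2 * ε := by
    have hP1 := hδε P hPf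
    have hP2 := hδε P' hP'f
    have h3 := abs_sub_le (riemannSum f G P) A (riemannSum f G P')
    have h4 : |A - riemannSum f G P'| = |riemannSum f G P' - A| := abs_sub_comm _ _
    linarith
  have h3 : |∑ k ∈ Finset.range m, (ρ k - ι k)| ≤ ε' := by
    calc |∑ k ∈ Finset.range m, (ρ k - ι k)| ≤ ∑ k ∈ Finset.range m, |ρ k - ι k| :=
          Finset.abs_sum_le_sum_abs _ _
      _ ≤ ∑ _k ∈ Finset.range m, (ε' / m) := by
          refine Finset.sum_le_sum (fun k hk => ?_)
          have hk' := Finset.mem_range.mp hk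
          rw [hρ]
          simp only [dif_pos hk']
          exact (hQε k hk').le
      _ = ε' := by
          rw [Finset.sum_const, Finset.card_range, nsmul_eq_mul]
          field_simp
  calc |∑ k ∈ Finset.range m, (f (t k) * (G (b k) - G (a k)) + f (a k) * G (a k) - ι k)|
      = |(riemannSum f G P - riemannSum f G P') + ∑ k ∈ Finset.range m, (ρ k - ι k)| := by rw [e1]
    _ ≤ |riemannSum f G P - riemannSum f G P'| + |∑ k ∈ Finset.range m, (ρ k - ι k)| :=
        abs_add_le _ _
    _ ≤ 2 * ε + ε' := add_le_add h2 h3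

end Core
theorem saks_henstock_abs {K : Type*} [LinearOrder K] [TopologicalSpace K] [OrderTopology K]
    [CompactSpace K] [BoundedOrder K] (f G : K → ℝ) (hG : Amenable G)
    (A : ℝ) (hf : HasIntegral f G (⊥ : K) ⊤ A) (ε : ℝ) (hε : 0 < ε)
    (δ : K → Set K) (hδ : IsGauge K ⊥ ⊤ δ)
    (hδε : ∀ P : TaggedPartition K (⊥ : K) (⊤ : K), P.IsFine δ → |riemannSum f G P - A| < ε)
    (m : ℕ) (a b t : ℕ → K)
    (hmem : ∀ k < m, a k ≤ t k ∧ t k ≤ b k)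
    (hord : ∀ k, k + 1 < m → b k ≤ a (k + 1))
    (hfine : ∀ k < m, Set.Ioc (a k) (b k) ⊆ δ (t k))
    (ι : ℕ → ℝ) (hι : ∀ k < m, HasIntegral f G (a k) (b k) (ι k)) :
    ∑ k ∈ Finset.range m, |f (t k) * (G (b k) - G (a k)) + f (a k) * G (a k) - ι k|
      ≤ 4 * ε := by
  classical
  set T : ℕ → ℝ := fun k => f (t k) * (G (b k) - G (a k)) + f (a k) * G (a k) - ι k with hT
  have hchain : ∀ j', ∀ j, j < j' → j' < m → b j ≤ a j' := by
    intro j'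
    induction j' with
    | zero => intro j hj _; exact absurd hj (Nat.not_lt_zero j)
    | succ j' ihc =>
      intro j hj hm'
      rcases Nat.lt_succ_iff_lt_or_eq.mp hj with h | rfl
      · exact (ihc j h (by omega)).trans
          (((hmem j' (by omega)).1.trans (hmem j' (by omega)).2).trans (hord j' hm'))
      · exact hord j hm'
  have key : ∀ u : Finset ℕ, u ⊆ Finset.range m → |∑ k ∈ u, T k| ≤ 2 * ε := by
    intro u hu
    set n := u.card with hn
    set iso := u.orderIsoOfFin hn.symm with hiso
    set e : ℕ → ℕ := fun i => if h : i < n then (iso ⟨i, h⟩ : ℕ) else 0 with he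
    have hemem : ∀ i, i < n → e i ∈ u := by
      intro i hi
      rw [he]; simp only [dif_pos hi]
      exact (iso ⟨i, hi⟩).2
    have heltm : ∀ i, i < n → e i < m := fun i hi => Finset.mem_range.mp (hu (hemem i hi))
    have hemono : ∀ i j, i < j → j < n → e i < e j := by
      intro i j hij hj
      rw [he]; simp only [dif_pos (hij.trans hj), dif_pos hj]
      exact Subtype.coe_lt_coe.mpr (iso.lt_iff_lt.mpr (Fin.mk_lt_mk.mpr hij))
    have hb := sh_core f G A ε hε δ hδ hδε n
      (fun k => a (e k)) (fun k => b (e k)) (fun k => t (e k))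
      (fun k hk => hmem (e k) (heltm k hk))
      (fun k hk => hchain (e (k + 1)) (e k) (hemono k (k + 1) (by omega) hk) (heltm (k + 1) hk))
      (fun k hk => hfine (e k) (heltm k hk))
      (fun k => ι (e k)) (fun k hk => hι (e k) (heltm k hk))
    have hbs : ∑ k ∈ Finset.range n, T (e k) = ∑ j ∈ u, T j := by
      refine Finset.sum_bij (fun k _ => e k)
        (fun k hk => hemem k (Finset.mem_range.mp hk)) ?_ ?_ (fun k hk => rfl)
      · intro k hk k' hk' hkk
        have hk1 := Finset.mem_range.mp hk
        have hk2 := Finset.mem_range.mp hk'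
        by_contra hne
        rcases Nat.lt_or_ge k k' with h | h
        · exact absurd hkk (ne_of_lt (hemono k k' h hk2))
        · have h' : k' < k := by omega
          exact absurd hkk.symm (ne_of_lt (hemono k' k h' hk1))
      · intro j hj
        refine ⟨(iso.symm ⟨j, hj⟩ : Fin n), Finset.mem_range.mpr (iso.symm ⟨j, hj⟩).isLt, ?_⟩
        rw [he]; simp only [dif_pos (iso.symm ⟨j, hj⟩).isLt]
        have h9 : (⟨(iso.symm ⟨j, hj⟩ : Fin n).val, (iso.symm ⟨j, hj⟩).isLt⟩ : Fin n)
            = iso.symm ⟨j, hj⟩ := rfl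
        rw [h9, OrderIso.apply_symm_apply]
    calc |∑ k ∈ u, T k| = |∑ k ∈ Finset.range n, T (e k)| := by rw [hbs]
      _ ≤ 2 * ε := by simpa [hT] using hb
  have hsplit := Finset.sum_filter_add_sum_filter_not (Finset.range m)
    (fun k => 0 ≤ T k) (fun k => |T k|)
  have hp : ∑ k ∈ (Finset.range m).filter (fun k => 0 ≤ T k), |T k|
      = ∑ k ∈ (Finset.range m).filter (fun k => 0 ≤ T k), T k :=
    Finset.sum_congr rfl (fun k hk => abs_of_nonneg (Finset.mem_filter.mp hk).2)
  have hnn : ∑ k ∈ (Finset.range m).filter (fun k => ¬ 0 ≤ T k), |T k|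
      = - ∑ k ∈ (Finset.range m).filter (fun k => ¬ 0 ≤ T k), T k := by
    rw [← Finset.sum_neg_distrib]
    exact Finset.sum_congr rfl
      (fun k hk => abs_of_neg (lt_of_not_ge (Finset.mem_filter.mp hk).2))
  have kp := key _ (Finset.filter_subset (fun k => 0 ≤ T k) (Finset.range m))
  have kn := key _ (Finset.filter_subset (fun k => ¬ 0 ≤ T k) (Finset.range m))
  have h5 : ∑ k ∈ (Finset.range m).filter (fun k => 0 ≤ T k), T k ≤ 2 * ε :=
    (le_abs_self _).trans kp
  have h6 : - ∑ k ∈ (Finset.range m).filter (fun k => ¬ 0 ≤ T k), T k ≤ 2 * ε :=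
    (neg_le_abs _).trans kn
  show ∑ k ∈ Finset.range m, |T k| ≤ 4 * ε
  rw [← hsplit]
  linarith
end SHDev
end
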